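/- Let n ≥ 1, let h : ℝⁿ → ℝ be a convex (hence continuous) function, and let u : ℂ → ℂⁿ be continuous on the closed unit disc and holomorphic (complex differentiable) on the open unit disc, such that u maps the unit circle into the zero section ℝⁿ ⊆ ℂⁿ (i.e. every coordinate of u(z) is real for z on the unit circle). Suppose that h(Re(u(z))) ≤ 0 for every z in the closed unit disc, and that h(Re(u(z₀))) = 0 for some z₀ in the open unit disc. Then h(Re(u(z))) = 0 for every z in the closed unit disc. (No holomorphic curve with boundary on the zero section can touch the hypersurface {h∘Re = 0} from the interior of the region {h∘Re ≤ 0}.) -/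

import Mathlib

/-- Maximum principle: no holomorphic curve with boundary on the zero
section can touch the level hypersurface `{h ∘ Re = 0}` of a convex function from the
interior of the region `{h ∘ Re ≤ 0}`. -/
theorem statement6 (n : ℕ) (hn : 1 ≤ n) (h : (Fin n → ℝ) → ℝ)
    (hconv : ConvexOn ℝ Set.univ h)
    (u : ℂ → (Fin n → ℂ))
    (hcont : ContinuousOn u (Metric.closedBall 0 1))
    (hdiff : DifferentiableOn ℂ u (Metric.ball 0 1))
    (hbdry : ∀ z ∈ Metric.sphere (0 : ℂ) 1, ∀ i, (u z i).im = 0)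
    (hle : ∀ z ∈ Metric.closedBall (0 : ℂ) 1, h (fun i => (u z i).re) ≤ 0)
    (z₀ : ℂ) (hz₀ : z₀ ∈ Metric.ball (0 : ℂ) 1)
    (heq : h (fun i => (u z₀ i).re) = 0) :
    ∀ z ∈ Metric.closedBall (0 : ℂ) 1, h (fun i => (u z i).re) = 0 := by
  intro z hz
  by_contra hne
  have hlt : h (fun i => (u z i).re) < 0 := lt_of_le_of_ne (hle z hz) hne
  -- the open convex set where h < 0
  set S : Set (Fin n → ℝ) := {x | h x < 0} with hSdef
  have hcont_h : Continuous h :=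
    continuousOn_univ.mp (hconv.continuousOn isOpen_univ)
  have hSopen : IsOpen S := isOpen_lt hcont_h continuous_const
  have hSconv : Convex ℝ S := by
    have := hconv.convex_lt 0
    simpa [hSdef, Set.sep_univ] using this
  set x₀ : Fin n → ℝ := fun i => (u z₀ i).re with hx₀def
  have hx₀S : x₀ ∉ S := by simp [hSdef, Set.mem_setOf_eq, heq]
  obtain ⟨g, hg⟩ := geometric_hahn_banach_open_point hSconv hSopen hx₀S
  set y : Fin n → ℝ := fun i => (u z i).re with hydef
  have hyS : y ∈ S := hlt
  -- key inequality on the closed ball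
  have key : ∀ w ∈ Metric.closedBall (0 : ℂ) 1,
      g (fun i => (u w i).re) ≤ g x₀ := by
    intro w hw
    set x : Fin n → ℝ := fun i => (u w i).re with hxdef
    have hx0 : h x ≤ 0 := hle w hw
    have hseg : ∀ t : ℝ, 0 < t → t < 1 → g x + t * (g y - g x) < g x₀ := by
      intro t ht0 ht1
      have hcomb : h ((1 - t) • x + t • y) ≤ (1 - t) * h x + t * h y :=
        hconv.2 (Set.mem_univ x) (Set.mem_univ y) (by linarith) (by linarith) (by ring)
      have hneg : h ((1 - t) • x + t • y) < 0 := by nlinarith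
      have := hg _ hneg
      have hcalc : g ((1 - t) • x + t • y) = g x + t * (g y - g x) := by
        rw [map_add, map_smul, map_smul, smul_eq_mul, smul_eq_mul]; ring
      linarith [hcalc ▸ this]
    have htend : Filter.Tendsto (fun t : ℝ => g x + t * (g y - g x))
        (nhdsWithin 0 (Set.Ioi 0)) (nhds (g x)) := by
      have : Filter.Tendsto (fun t : ℝ => g x + t * (g y - g x)) (nhds 0)
          (nhds (g x + 0 * (g y - g x))) :=
        (continuous_const.add (continuous_id.mul continuous_const)).tendsto 0
      simpa using this.mono_left nhdsWithin_le_nhds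
    refine le_of_tendsto htend ?_
    filter_upwards [Ioo_mem_nhdsGT_of_mem (Set.left_mem_Ico.2 one_pos)] with t ht
    exact (hseg t ht.1 ht.2).le
  -- express g as a sum
  have hgsum : ∀ v : Fin n → ℝ,
      g v = ∑ i, v i * g (fun j => if i = j then 1 else 0) := fun v => by
    simpa [smul_eq_mul] using
      LinearMap.pi_apply_eq_sum_univ (g : (Fin n → ℝ) →ₗ[ℝ] ℝ) v
  set a : Fin n → ℝ := fun i => g (fun j => if i = j then 1 else 0) with hadef
  -- complexified functional
  set F : ℂ → ℂ := fun w => ∑ i, u w i * (a i : ℂ) with hFdef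
  have hFre : ∀ w, (F w).re = g (fun i => (u w i).re) := by
    intro w
    rw [hgsum]
    simp [hFdef, Complex.re_sum, Complex.mul_re, hadef]
  have hudiff : ∀ i, DifferentiableOn ℂ (fun w => u w i) (Metric.ball 0 1) := fun i =>
    differentiableOn_pi.1 hdiff i
  have hFdiff : DifferentiableOn ℂ F (Metric.ball 0 1) :=
    DifferentiableOn.fun_sum fun i _ => (hudiff i).mul_const _
  have hFcont : ContinuousOn F (Metric.closedBall 0 1) :=
    continuousOn_finset_sum _ fun i _ =>
      ((continuousOn_pi.1 hcont i).mul continuousOn_const)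
  have hFcl : DiffContOnCl ℂ F (Metric.ball 0 1) :=
    ⟨hFdiff, by rwa [closure_ball (0 : ℂ) one_ne_zero]⟩
  set G : ℂ → ℂ := fun w => Complex.exp (F w) with hGdef
  have hGcl : DiffContOnCl ℂ G (Metric.ball 0 1) := ⟨hFcl.1.cexp, hFcl.2.cexp⟩
  have hGnorm : ∀ w, ‖G w‖ = Real.exp ((F w).re) := fun w => by
    simp [hGdef, Complex.norm_exp]
  have hmax : IsMaxOn (norm ∘ G) (Metric.ball 0 1) z₀ := by
    intro w hw
    simp only [Function.comp_apply, Set.mem_setOf_eq, hGnorm]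
    exact Real.exp_le_exp.2 (by rw [hFre, hFre]; exact key w (Metric.ball_subset_closedBall hw))
  have heqOn := Complex.norm_eqOn_closure_of_isPreconnected_of_isMaxOn
    (convex_ball (0 : ℂ) 1).isPreconnected Metric.isOpen_ball hGcl hz₀ hmax
  have hzcl : z ∈ closure (Metric.ball (0 : ℂ) 1) := by
    rwa [closure_ball (0 : ℂ) one_ne_zero]
  have := heqOn hzcl
  simp only [Function.comp_apply, Function.const_apply, hGnorm] at this
  have hgeq : g y = g x₀ := by
    have h2 : (F z).re = (F z₀).re := Real.exp_eq_exp.mp this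
    rw [hFre, hFre] at h2
    exact h2
  exact absurd (hg y hyS) (by rw [hgeq]; exact lt_irrefl _)
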